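/- Let A be a self-adjoint operator on a complex Hilbert space and suppose f satisfies ‖f‖ ≤ b + a‖Af‖ with a > 0 and b ≥ 0. Then for every natural number l, if f belongs to the domain of A^(2^l), one has ‖f‖ ≤ 2^l·b + 8^(2^l − 1)·a^(2^l)·‖A^(2^l) f‖. -/

import Mathlib

lemma core_step {H : Type*} [NormedAddCommGroup H] [InnerProductSpace ℂ H]
    (B : H →ₗ[ℂ] H)
    (hB : ∀ x y : H, (inner ℂ (B x) y : ℂ) = inner ℂ x (B y))
    (a b : ℝ) (ha : 0 < a) (hb : 0 ≤ b) (f : H)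
    (h : ‖f‖ ≤ b + a * ‖B f‖) :
    ‖f‖ ≤ 2 * b + 8 * a ^ 2 * ‖B (B f)‖ := by
  have key : ‖B f‖ ^ 2 ≤ ‖f‖ * ‖B (B f)‖ := by
    have h1 : (inner ℂ (B f) (B f) : ℂ) = inner ℂ f (B (B f)) := hB f (B f)
    have h2 : (‖B f‖ : ℝ) ^ 2 = RCLike.re (inner ℂ (B f) (B f) : ℂ) :=
      (@inner_self_eq_norm_sq ℂ _ _ _ _ (B f)).symm
    have h3 : RCLike.re (inner ℂ f (B (B f)) : ℂ) ≤ ‖(inner ℂ f (B (B f)) : ℂ)‖ :=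
      RCLike.re_le_norm _
    have h4 : ‖(inner ℂ f (B (B f)) : ℂ)‖ ≤ ‖f‖ * ‖B (B f)‖ := norm_inner_le_norm _ _
    rw [h2, h1]; linarith
  have hx : (0:ℝ) ≤ ‖f‖ := norm_nonneg _
  have hy : (0:ℝ) ≤ ‖B f‖ := norm_nonneg _
  have hz : (0:ℝ) ≤ ‖B (B f)‖ := norm_nonneg _
  nlinarith [sq_nonneg (‖f‖ - 2*b), sq_nonneg (‖f‖ - 2*a^2*‖B (B f)‖),
    mul_pos ha ha, sq_nonneg (a*‖B f‖ - ‖f‖/2), sq_nonneg (‖f‖ - b),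
    mul_nonneg (mul_nonneg ha.le ha.le) hz, mul_nonneg hb hx,
    mul_nonneg (mul_nonneg ha.le hy) hx]

/-- Lemma 2: if `A` is self-adjoint (symmetric) and `‖f‖ ≤ b + a ‖A f‖` with `a > 0`,
then for all `l`, `‖f‖ ≤ 2^l b + 8^(2^l - 1) a^(2^l) ‖A^(2^l) f‖`. -/
theorem stmt2 {H : Type*} [NormedAddCommGroup H] [InnerProductSpace ℂ H]
    (A : H →ₗ[ℂ] H)
    (hsa : ∀ x y : H, (inner ℂ (A x) y : ℂ) = inner ℂ x (A y))
    (a b : ℝ) (ha : 0 < a) (hb : 0 ≤ b) (f : H)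
    (hf : ‖f‖ ≤ b + a * ‖A f‖) :
    ∀ l : ℕ, ‖f‖ ≤ (2 : ℝ) ^ l * b +
      (8 : ℝ) ^ (2 ^ l - 1) * a ^ (2 ^ l) * ‖(A ^ (2 ^ l)) f‖ := by
  have hpowsym : ∀ n : ℕ, ∀ x y : H, (inner ℂ ((A ^ n) x) y : ℂ) = inner ℂ x ((A ^ n) y) := by
    intro n
    induction n with
    | zero => intro x y; simp
    | succ k ih =>
      intro x y
      rw [pow_succ]
      simp only [Module.End.mul_apply]
      rw [ih (A x) y, hsa x ((A ^ k) y)]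
      congr 1
      rw [← Module.End.mul_apply, ← pow_succ', pow_succ, Module.End.mul_apply]
  intro l
  induction l with
  | zero => simpa using hf
  | succ l ih =>
    have hB := hpowsym (2 ^ l)
    have ha' : 0 < (8:ℝ) ^ (2 ^ l - 1) * a ^ (2 ^ l) := by positivity
    have hb' : 0 ≤ (2:ℝ) ^ l * b := by positivity
    have h := core_step (A ^ (2 ^ l)) hB _ _ ha' hb' f ih
    have hp : (A ^ (2 ^ l)) ((A ^ (2 ^ l)) f) = (A ^ (2 ^ (l+1))) f := by
      rw [← Module.End.mul_apply, ← pow_add]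
      ring_nf
    rw [hp] at h
    calc ‖f‖ ≤ 2 * ((2:ℝ)^l * b) + 8 * ((8:ℝ) ^ (2 ^ l - 1) * a ^ (2 ^ l))^2 * ‖(A ^ (2 ^ (l+1))) f‖ := h
      _ = (2:ℝ) ^ (l+1) * b + (8:ℝ) ^ (2 ^ (l+1) - 1) * a ^ (2 ^ (l+1)) * ‖(A ^ (2 ^ (l+1))) f‖ := by
        have h1 : (2:ℕ) ^ (l+1) - 1 = 2 * (2^l - 1) + 1 := by
          have : 1 ≤ 2^l := Nat.one_le_two_pow
          omega
        have h2 : (2:ℕ) ^ (l+1) = 2 * 2^l := by ring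
        rw [h1, h2]
        ring
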